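/- arXiv:2207.13924 — 5 statements merged into one kernel-verified Lean document; each statement's English description precedes it below -/
import Mathlib

section
/- Let W be an N×N symmetric doubly stochastic matrix with positive diagonal entries whose associated graph is connected. Then the spectral norm of W − (1/N)𝟙𝟙ᵀ is strictly less than 1, where 𝟙 is the all-ones vector in ℝ^N. -/
open Matrix Finset

lemma const_of_conn {N : ℕ} {W : Matrix (Fin N) (Fin N) ℝ}
    (hconn : (SimpleGraph.fromRel (fun i j : Fin N => 0 < W i j)).Connected)
    {y : Fin N → ℝ}
    (h : ∀ a b, (SimpleGraph.fromRel (fun i j : Fin N => 0 < W i j)).Adj a b → y a = y b)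
    (a b : Fin N) : y a = y b := by
  obtain ⟨w⟩ := hconn.preconnected a b
  induction w with
  | nil => rfl
  | cons hadj _ ih => exact (h _ _ hadj).trans ih

lemma key {N : ℕ} {W : Matrix (Fin N) (Fin N) ℝ}
    (hsymm : Wᵀ = W)
    (hnonneg : ∀ i j, 0 ≤ W i j)
    (hdiag : ∀ i, 0 < W i i)
    (hrow : W.mulVec (fun _ => 1) = fun _ => 1)
    (hconn : (SimpleGraph.fromRel (fun i j : Fin N => 0 < W i j)).Connected)
    {y : Fin N → ℝ} (hy : y ≠ 0) (hsum : ∑ i, y i = 0) :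
    ∑ i, (W.mulVec y i)^2 < ∑ i, (y i)^2 := by
  have hsymm' : ∀ i j, W i j = W j i := by
    intro i j
    conv_lhs => rw [← hsymm]
    rfl
  have hrowsum : ∀ i, ∑ j, W i j = 1 := by
    intro i
    have := congrFun hrow i
    simpa [Matrix.mulVec, dotProduct] using this
  have hcolsum : ∀ j, ∑ i, W i j = 1 := by
    intro j
    rw [show (∑ i, W i j) = ∑ i, W j i from Finset.sum_congr rfl (fun i _ => hsymm' i j)]
    exact hrowsum j
  set A : Matrix (Fin N) (Fin N) ℝ := fun j k => ∑ i, W i j * W i k with hA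
  have hAnn : ∀ j k, 0 ≤ A j k := fun j k =>
    Finset.sum_nonneg fun i _ => mul_nonneg (hnonneg i j) (hnonneg i k)
  have hArow : ∀ j, ∑ k, A j k = 1 := by
    intro j
    simp only [hA]
    rw [Finset.sum_comm]
    calc ∑ i, ∑ k, W i j * W i k = ∑ i, W i j * ∑ k, W i k := by
          simp [Finset.mul_sum]
      _ = 1 := by simp [hrowsum, hcolsum]
  have hAsymm : ∀ j k, A j k = A k j := fun j k => by
    simp only [hA]; exact Finset.sum_congr rfl fun i _ => mul_comm _ _
  have hAcol : ∀ k, ∑ j, A j k = 1 := by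
    intro k
    rw [show (∑ j, A j k) = ∑ j, A k j from Finset.sum_congr rfl (fun j _ => hAsymm j k)]
    exact hArow k
  have hLHS : ∑ i, (W.mulVec y i)^2 = ∑ j, ∑ k, A j k * (y j * y k) := by
    simp only [Matrix.mulVec, dotProduct, hA]
    calc ∑ i, (∑ j, W i j * y j)^2
        = ∑ i, ∑ j, ∑ k, (W i j * y j) * (W i k * y k) := by
          refine Finset.sum_congr rfl fun i _ => ?_
          rw [sq, Finset.sum_mul_sum]
      _ = ∑ j, ∑ i, ∑ k, (W i j * y j) * (W i k * y k) := Finset.sum_comm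
      _ = ∑ j, ∑ k, ∑ i, (W i j * y j) * (W i k * y k) :=
          Finset.sum_congr rfl fun j _ => Finset.sum_comm
      _ = ∑ j, ∑ k, (∑ i, W i j * W i k) * (y j * y k) := by
          refine Finset.sum_congr rfl fun j _ => Finset.sum_congr rfl fun k _ => ?_
          rw [Finset.sum_mul]; exact Finset.sum_congr rfl fun i _ => by ring
  -- the Dirichlet energy identity
  have hid : ∑ j, ∑ k, A j k * (y j - y k)^2
      = 2 * ∑ j, (y j)^2 - 2 * ∑ j, ∑ k, A j k * (y j * y k) := by
    have e1 : ∀ j k, A j k * (y j - y k)^2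
        = A j k * (y j)^2 + A j k * (y k)^2 - 2 * (A j k * (y j * y k)) := by
      intros; ring
    simp only [e1, Finset.sum_sub_distrib, Finset.sum_add_distrib, ← Finset.mul_sum]
    have e2 : ∑ j, ∑ k, A j k * (y j)^2 = ∑ j, (y j)^2 := by
      refine Finset.sum_congr rfl fun j _ => ?_
      rw [← Finset.sum_mul, hArow]; ring
    have e3 : ∑ j, ∑ k, A j k * (y k)^2 = ∑ k, (y k)^2 := by
      rw [Finset.sum_comm]
      refine Finset.sum_congr rfl fun k _ => ?_
      rw [← Finset.sum_mul, hAcol]; ring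
    rw [e2, e3]; ring
  -- positivity of the energy
  obtain ⟨i0, hi0⟩ := Function.ne_iff.mp hy
  simp only [Pi.zero_apply] at hi0
  have hne : ¬ ∀ a b, (SimpleGraph.fromRel (fun i j : Fin N => 0 < W i j)).Adj a b → y a = y b := by
    intro h
    have hconst : ∀ a, y a = y i0 := fun a => const_of_conn hconn h a i0
    have : ∑ i, y i = (N : ℝ) * y i0 := by
      rw [Finset.sum_congr rfl fun a _ => hconst a]
      simp [Finset.card_univ, mul_comm]
    rw [hsum] at this
    have hNpos : (0 : ℝ) < N := by exact_mod_cast i0.pos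
    rcases mul_eq_zero.mp this.symm with h | h
    · exact absurd h (ne_of_gt hNpos)
    · exact hi0 h
  push_neg at hne
  obtain ⟨a, b, hadj, hyab⟩ := hne
  rw [SimpleGraph.fromRel_adj] at hadj
  have hWab : 0 < W a b := by
    rcases hadj.2 with h | h
    · exact h
    · rw [hsymm' a b]; exact h
  have hAab : 0 < A a b :=
    lt_of_lt_of_le (mul_pos (hdiag a) hWab)
      (Finset.single_le_sum (f := fun i => W i a * W i b)
        (fun i _ => mul_nonneg (hnonneg i a) (hnonneg i b)) (Finset.mem_univ a))
  have hEpos : 0 < ∑ j, ∑ k, A j k * (y j - y k)^2 := by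
    refine Finset.sum_pos' (fun j _ => Finset.sum_nonneg fun k _ =>
      mul_nonneg (hAnn j k) (sq_nonneg _)) ⟨a, Finset.mem_univ a, ?_⟩
    refine Finset.sum_pos' (fun k _ => mul_nonneg (hAnn a k) (sq_nonneg _))
      ⟨b, Finset.mem_univ b, ?_⟩
    refine mul_pos hAab ?_
    rw [← sq_abs]
    exact pow_pos (abs_pos.mpr (sub_ne_zero.mpr hyab)) 2
  rw [hLHS]
  linarith

section aux
variable {N : ℕ} {W : Matrix (Fin N) (Fin N) ℝ}

lemma key2 (hN : 0 < N)
    (hsymm : Wᵀ = W)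
    (hnonneg : ∀ i j, 0 ≤ W i j)
    (hdiag : ∀ i, 0 < W i i)
    (hrow : W.mulVec (fun _ => 1) = fun _ => 1)
    (hconn : (SimpleGraph.fromRel (fun i j : Fin N => 0 < W i j)).Connected)
    (hkey : ∀ {y : Fin N → ℝ}, y ≠ 0 → ∑ i, y i = 0 →
      ∑ i, (W.mulVec y i)^2 < ∑ i, (y i)^2)
    (x : Fin N → ℝ) (hx : x ≠ 0) :
    ∑ i, ((W - (N:ℝ)⁻¹ • Matrix.of (fun _ _ : Fin N => (1:ℝ))).mulVec x i)^2
      < ∑ i, (x i)^2 := by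
  have hNR : (0:ℝ) < N := by exact_mod_cast hN
  have hNne : (N:ℝ) ≠ 0 := ne_of_gt hNR
  set s := ∑ i, x i with hs
  set y : Fin N → ℝ := fun i => x i - s / N with hy
  have hrowsum : ∀ i, ∑ j, W i j = 1 := by
    intro i
    have := congrFun hrow i
    simpa [Matrix.mulVec, dotProduct] using this
  have hMx : (W - (N:ℝ)⁻¹ • Matrix.of (fun _ _ : Fin N => (1:ℝ))).mulVec x
      = W.mulVec y := by
    funext i
    simp only [Matrix.mulVec, dotProduct, Matrix.sub_apply, Matrix.smul_apply,
      Matrix.of_apply, smul_eq_mul, mul_one, hy]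
    simp only [sub_mul, mul_sub, Finset.sum_sub_distrib]
    congr 1
    rw [← Finset.mul_sum, ← Finset.sum_mul, hrowsum, ← hs]
    field_simp
  have hsumy : ∑ i, y i = 0 := by
    simp only [hy, Finset.sum_sub_distrib, Finset.sum_const, card_univ,
      Fintype.card_fin, nsmul_eq_mul, ← hs]
    field_simp
    ring
  have hxy : ∑ i, (x i)^2 = ∑ i, (y i)^2 + s^2 / N := by
    have hterm : ∀ i, (x i)^2 = (y i)^2 + 2*(s/N)*(y i) + (s/N)^2 := by
      intro i; simp only [hy]; ring
    rw [Finset.sum_congr rfl fun i _ => hterm i]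
    simp only [Finset.sum_add_distrib, ← Finset.mul_sum, hsumy, mul_zero,
      Finset.sum_const, card_univ, Fintype.card_fin, nsmul_eq_mul]
    field_simp
    ring
  by_cases hy0 : y = 0
  · rw [hMx, hy0]
    simp only [Matrix.mulVec_zero, Pi.zero_apply, ne_eq, zero_pow, Finset.sum_const,
      smul_zero]
    obtain ⟨i, hi⟩ := Function.ne_iff.mp hx
    simp only [Pi.zero_apply] at hi
    have : (0:ℝ) < ∑ i, (x i)^2 :=
      Finset.sum_pos' (fun i _ => sq_nonneg _)
        ⟨i, Finset.mem_univ _, by rw [← sq_abs]; exact pow_pos (abs_pos.mpr hi) 2⟩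
    simpa using this
  · rw [hMx]
    have h1 := hkey hy0 hsumy
    have hs2 : (0:ℝ) ≤ s^2 / N := by positivity
    linarith [hxy]



end aux

lemma norm_lt_of_pointwise (N : ℕ) (hN : 0 < N) (M : Matrix (Fin N) (Fin N) ℝ)
    (hpt : ∀ x : Fin N → ℝ, x ≠ 0 → ∑ i, (M.mulVec x i)^2 < ∑ i, (x i)^2) :
    ‖Matrix.toEuclideanCLM (𝕜 := ℝ) M‖ < 1 := by
  set T := Matrix.toEuclideanCLM (𝕜 := ℝ) M with hT
  have happ : ∀ x : EuclideanSpace ℝ (Fin N), ∀ i, (T x) i = M.mulVec (⇑x) i := by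
    intro x i
    have := congrFun (Matrix.ofLp_toEuclideanCLM (𝕜 := ℝ) M x) i
    exact this
  have hnorm : ∀ x : EuclideanSpace ℝ (Fin N), x ≠ 0 → ‖T x‖ < ‖x‖ := by
    intro x hx
    rw [EuclideanSpace.norm_eq, EuclideanSpace.norm_eq]
    apply Real.sqrt_lt_sqrt (Finset.sum_nonneg fun i _ => sq_nonneg _)
    have h1 : ∀ i, ‖(T x) i‖^2 = (M.mulVec (⇑x) i)^2 := by
      intro i; rw [happ, Real.norm_eq_abs, sq_abs]
    have h2 : ∀ i, ‖x i‖^2 = (x i)^2 := fun i => by rw [Real.norm_eq_abs, sq_abs]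
    simp only [h1, h2]
    exact hpt (⇑x) (by intro h; exact hx (by ext i; exact congrFun h i))
  haveI : Nonempty (Fin N) := ⟨⟨0, hN⟩⟩
  have hsph : (Metric.sphere (0 : EuclideanSpace ℝ (Fin N)) 1).Nonempty :=
    NormedSpace.sphere_nonempty.mpr zero_le_one
  obtain ⟨x0, hx0mem, hx0max⟩ := (isCompact_sphere (0 : EuclideanSpace ℝ (Fin N)) 1).exists_isMaxOn
    hsph (Continuous.continuousOn (by continuity : Continuous fun x => ‖T x‖))
  have hx0 : ‖x0‖ = 1 := by simpa using hx0mem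
  have hx0ne : x0 ≠ 0 := fun h => by simp [h] at hx0
  have hlt : ‖T x0‖ < 1 := by
    have := hnorm x0 hx0ne
    rwa [hx0] at this
  have hle : ‖T‖ ≤ ‖T x0‖ := by
    apply ContinuousLinearMap.opNorm_le_bound T (norm_nonneg _)
    intro y
    by_cases hy : y = 0
    · simp [hy]
    · have hyn : (0:ℝ) < ‖y‖ := norm_pos_iff.mpr hy
      set z : EuclideanSpace ℝ (Fin N) := ‖y‖⁻¹ • y with hz
      have hzmem : z ∈ Metric.sphere (0 : EuclideanSpace ℝ (Fin N)) 1 := by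
        simp [hz, norm_smul, abs_of_pos (inv_pos.mpr hyn), inv_mul_cancel₀ (ne_of_gt hyn)]
      have := hx0max hzmem
      simp only [Set.mem_setOf_eq] at this
      have hTz : ‖T z‖ = ‖y‖⁻¹ * ‖T y‖ := by
        rw [hz, T.map_smul, norm_smul, Real.norm_eq_abs, abs_of_pos (inv_pos.mpr hyn)]
      rw [hTz] at this
      calc ‖T y‖ = ‖y‖ * (‖y‖⁻¹ * ‖T y‖) := by field_simp
        _ ≤ ‖y‖ * ‖T x0‖ := by
            apply mul_le_mul_of_nonneg_left this (le_of_lt hyn)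
        _ = ‖T x0‖ * ‖y‖ := mul_comm _ _
  linarith


open Matrix

/-- For an N×N symmetric doubly stochastic matrix W with positive
diagonal and connected associated graph, the spectral (L2 operator) norm of
W − (1/N)𝟙𝟙ᵀ is strictly less than 1. -/
theorem stmt0 (N : ℕ) (hN : 0 < N) (W : Matrix (Fin N) (Fin N) ℝ)
    (hsymm : Wᵀ = W)
    (hnonneg : ∀ i j, 0 ≤ W i j)
    (hdiag : ∀ i, 0 < W i i)
    (hrow : W.mulVec (fun _ => 1) = fun _ => 1)
    (hcol : Matrix.vecMul (fun _ => 1) W = fun _ => 1)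
    (hconn : (SimpleGraph.fromRel (fun i j : Fin N => 0 < W i j)).Connected) :
    ‖Matrix.toEuclideanCLM (𝕜 := ℝ)
        (W - (N : ℝ)⁻¹ • Matrix.of (fun _ _ : Fin N => (1 : ℝ)))‖ < 1 := by
  apply norm_lt_of_pointwise N hN
  intro x hx
  exact key2 hN hsymm hnonneg hdiag hrow hconn
    (fun hy hs => key hsymm hnonneg hdiag hrow hconn hy hs) x hx
end

section
/- Let W be an N×N symmetric doubly stochastic matrix with connected associated graph and positive diagonal, and let B be symmetric with B² = (1/2)(I_N − W). Then for λ ∈ ℝ^{Nm}, (B ⊗ I_m)λ = 0 if and only if λ = 𝟙_N ⊗ μ for some μ ∈ ℝ^m. -/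
open Matrix Kronecker

lemma aux_const {N : ℕ} (hN : 0 < N) (W : Matrix (Fin N) (Fin N) ℝ)
    (hsymm : Wᵀ = W)
    (hnonneg : ∀ i j, 0 ≤ W i j)
    (hrow : W.mulVec (fun _ => 1) = fun _ => 1)
    (hconn : (SimpleGraph.fromRel (fun i j : Fin N => 0 < W i j)).Connected)
    (v : Fin N → ℝ) (hv : W.mulVec v = v) (i j : Fin N) : v i = v j := by
  have : Nonempty (Fin N) := ⟨⟨0, hN⟩⟩
  obtain ⟨i0, hmax⟩ := Finite.exists_max v
  set G := SimpleGraph.fromRel (fun i j : Fin N => 0 < W i j) with hG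
  have step : ∀ a b : Fin N, G.Adj a b → v a = v i0 → v b = v i0 := by
    intro a b hab ha
    have hWab : 0 < W a b := by
      rcases hab.2 with h | h
      · exact h
      · have h2 := congrFun (congrFun hsymm b) a
        rw [Matrix.transpose_apply] at h2
        rw [h2]; exact h
    have hsum1 : ∑ k, W a k = 1 := by
      have := congrFun hrow a
      simpa [Matrix.mulVec, dotProduct] using this
    have hle : ∀ k ∈ Finset.univ, W a k * v k ≤ W a k * v i0 :=
      fun k _ => mul_le_mul_of_nonneg_left (hmax k) (hnonneg a k)
    have hsumeq : ∑ k, W a k * v k = ∑ k, W a k * v i0 := by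
      have h1 : ∑ k, W a k * v k = v a := by
        have := congrFun hv a
        simpa [Matrix.mulVec, dotProduct] using this
      rw [h1, ha, ← Finset.sum_mul, hsum1, one_mul]
    have := (Finset.sum_eq_sum_iff_of_le hle).1 hsumeq b (Finset.mem_univ b)
    exact mul_left_cancel₀ (ne_of_gt hWab) this
  have walkstep : ∀ a b : Fin N, G.Walk a b → v a = v i0 → v b = v i0 := by
    intro a b w
    induction w with
    | nil => exact id
    | cons h _ ih => exact fun ha => ih (step _ _ h ha)
  have key : ∀ k, v k = v i0 := fun k =>
    walkstep i0 k (hconn i0 k).some rfl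
  rw [key i, key j]

lemma aux_kron {N m : ℕ} (A : Matrix (Fin N) (Fin N) ℝ) (x : Fin N × Fin m → ℝ)
    (i : Fin N) (j : Fin m) :
    ((A ⊗ₖ (1 : Matrix (Fin m) (Fin m) ℝ)).mulVec x) (i, j) = ∑ k, A i k * x (k, j) := by
  simp [Matrix.mulVec, dotProduct, Fintype.sum_prod_type, Matrix.one_apply,
    mul_ite, ite_mul, mul_assoc]

lemma aux_Bone {N : ℕ} (B W : Matrix (Fin N) (Fin N) ℝ)
    (hrow : W.mulVec (fun _ => 1) = fun _ => 1)
    (hBsymm : Bᵀ = B)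
    (hB : B ^ 2 = (2 : ℝ)⁻¹ • (1 - W)) :
    B.mulVec (fun _ => 1) = 0 := by
  have hB2 : (B * B).mulVec (fun _ => 1) = 0 := by
    rw [← pow_two, hB, Matrix.smul_mulVec, Matrix.sub_mulVec, Matrix.one_mulVec, hrow]
    simp
  set u := B.mulVec (fun _ => 1) with hu
  have hdot : u ⬝ᵥ u = 0 := by
    rw [hu, Matrix.dotProduct_mulVec]
    have : Matrix.vecMul (B.mulVec fun _ => 1) B = 0 := by
      rw [← Matrix.mulVec_transpose, Matrix.mulVec_mulVec, hBsymm, hB2]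
    rw [this, zero_dotProduct]
  funext i
  have hsq : ∑ k, u k * u k = 0 := hdot
  have := (Finset.sum_eq_zero_iff_of_nonneg (fun k _ => mul_self_nonneg (u k))).1 hsq i
    (Finset.mem_univ i)
  simpa using mul_self_eq_zero.1 this

/-- For W symmetric doubly stochastic with positive diagonal and
connected graph, and B symmetric with B² = (1/2)(I − W), one has
(B ⊗ I_m)λ = 0 iff λ = 𝟙_N ⊗ μ for some μ ∈ ℝ^m. -/
theorem stmt2 (N m : ℕ) (hN : 0 < N) (W B : Matrix (Fin N) (Fin N) ℝ)
    (hsymm : Wᵀ = W)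
    (hnonneg : ∀ i j, 0 ≤ W i j)
    (hdiag : ∀ i, 0 < W i i)
    (hrow : W.mulVec (fun _ => 1) = fun _ => 1)
    (hcol : Matrix.vecMul (fun _ => 1) W = fun _ => 1)
    (hconn : (SimpleGraph.fromRel (fun i j : Fin N => 0 < W i j)).Connected)
    (hBsymm : Bᵀ = B)
    (hB : B ^ 2 = (2 : ℝ)⁻¹ • (1 - W))
    (lam : Fin N × Fin m → ℝ) :
    (B ⊗ₖ (1 : Matrix (Fin m) (Fin m) ℝ)).mulVec lam = 0 ↔
      ∃ μ : Fin m → ℝ, lam = fun p => μ p.2 := by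
  constructor
  · intro h
    have h2 : ((B ^ 2) ⊗ₖ (1 : Matrix (Fin m) (Fin m) ℝ)).mulVec lam = 0 := by
      have hone : (1 : Matrix (Fin m) (Fin m) ℝ) = 1 * 1 := (one_mul 1).symm
      rw [pow_two, hone, Matrix.mul_kronecker_mul, ← Matrix.mulVec_mulVec, h,
        Matrix.mulVec_zero]
    rw [hB] at h2
    have h3 : ((1 - W) ⊗ₖ (1 : Matrix (Fin m) (Fin m) ℝ)).mulVec lam = 0 := by
      rw [Matrix.smul_kronecker, Matrix.smul_mulVec] at h2
      have := smul_eq_zero.1 h2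
      rcases this with h | h
      · exact absurd h (by norm_num)
      · exact h
    refine ⟨fun j => lam (⟨0, hN⟩, j), ?_⟩
    funext p
    obtain ⟨i, j⟩ := p
    have hv : W.mulVec (fun i => lam (i, j)) = fun i => lam (i, j) := by
      funext i
      have := congrFun h3 (i, j)
      rw [aux_kron] at this
      simp only [Matrix.sub_apply, sub_mul, Finset.sum_sub_distrib, Matrix.one_apply,
        ite_mul, one_mul, zero_mul, Finset.sum_ite_eq, Finset.mem_univ, if_true,
        Pi.zero_apply, sub_eq_zero] at this
      simpa [Matrix.mulVec, dotProduct] using this.symm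
    exact aux_const hN W hsymm hnonneg hrow hconn _ hv i ⟨0, hN⟩
  · rintro ⟨μ, rfl⟩
    have hBone := aux_Bone B W hrow hBsymm hB
    funext p
    obtain ⟨i, j⟩ := p
    have hsum : ∑ k, B i k = 0 := by
      have := congrFun hBone i
      simpa [Matrix.mulVec, dotProduct] using this
    show ((B ⊗ₖ (1 : Matrix (Fin m) (Fin m) ℝ)).mulVec fun p => μ p.2) (i, j) = 0
    rw [aux_kron]
    simp only [← Finset.sum_mul, hsum, zero_mul]
end

section
/- Let W be symmetric doubly stochastic with connected associated graph and positive diagonal, W_∞ := (𝟙𝟙ᵀ/N) ⊗ I_n, 𝒲 := W ⊗ I_n, and σ := ‖W − 𝟙𝟙ᵀ/N‖ < 1. Then for any x ∈ ℝ^{Nn} and x* in the range of W_∞: (i) ‖𝒲x − x*‖² = ‖W_∞x − x*‖² + ‖𝒲x_⊥‖², where x_⊥ := (I − W_∞)x; and (ii) ‖𝒲x_⊥‖ ≤ σ‖x_⊥‖. -/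
open Matrix Kronecker

lemma kron_one_apply {N n : ℕ} (A : Matrix (Fin N) (Fin N) ℝ)
    (y : EuclideanSpace ℝ (Fin N × Fin n)) (j : Fin N) (k : Fin n) :
    (Matrix.toEuclideanCLM (𝕜 := ℝ) (A ⊗ₖ (1 : Matrix (Fin n) (Fin n) ℝ)) y) (j, k) =
      (Matrix.toEuclideanCLM (𝕜 := ℝ) A
        ((WithLp.equiv 2 (Fin N → ℝ)).symm (fun j' => y (j', k)))) j := by
  change ((A ⊗ₖ (1 : Matrix (Fin n) (Fin n) ℝ)).mulVec (fun p => y p)) (j, k) = _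
  have : (Matrix.toEuclideanCLM (𝕜 := ℝ) A
      ((WithLp.equiv 2 (Fin N → ℝ)).symm (fun j' => y (j', k)))) j
      = (A.mulVec (fun j' => y (j', k))) j := rfl
  rw [this]
  simp only [Matrix.mulVec, dotProduct, Fintype.sum_prod_type,
    Matrix.kronecker_apply, Matrix.one_apply]
  rw [Finset.sum_comm]
  simp [mul_ite, Finset.sum_ite_eq']

lemma euclid_norm_sq {ι : Type*} [Fintype ι] (z : EuclideanSpace ℝ ι) :
    ‖z‖ ^ 2 = ∑ i, (z i) ^ 2 := by
  rw [EuclideanSpace.norm_eq, Real.sq_sqrt (by positivity)]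
  simp [Real.norm_eq_abs, sq_abs]

lemma kron_one_norm_le {N n : ℕ} (A : Matrix (Fin N) (Fin N) ℝ)
    (y : EuclideanSpace ℝ (Fin N × Fin n)) :
    ‖Matrix.toEuclideanCLM (𝕜 := ℝ) (A ⊗ₖ (1 : Matrix (Fin n) (Fin n) ℝ)) y‖ ≤
      ‖Matrix.toEuclideanCLM (𝕜 := ℝ) A‖ * ‖y‖ := by
  set T := Matrix.toEuclideanCLM (𝕜 := ℝ) A
  have h2 : ‖Matrix.toEuclideanCLM (𝕜 := ℝ) (A ⊗ₖ (1 : Matrix (Fin n) (Fin n) ℝ)) y‖ ^ 2 ≤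
      (‖T‖ * ‖y‖) ^ 2 := by
    rw [euclid_norm_sq]
    rw [Fintype.sum_prod_type]
    have hterm : ∀ j k, (Matrix.toEuclideanCLM (𝕜 := ℝ)
        (A ⊗ₖ (1 : Matrix (Fin n) (Fin n) ℝ)) y) (j, k) ^ 2 =
        (T ((WithLp.equiv 2 (Fin N → ℝ)).symm (fun j' => y (j', k)))) j ^ 2 := by
      intro j k; rw [kron_one_apply]
    calc ∑ j, ∑ k, (Matrix.toEuclideanCLM (𝕜 := ℝ)
          (A ⊗ₖ (1 : Matrix (Fin n) (Fin n) ℝ)) y) (j, k) ^ 2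
        = ∑ k, ‖T ((WithLp.equiv 2 (Fin N → ℝ)).symm (fun j' => y (j', k)))‖ ^ 2 := by
          rw [Finset.sum_comm]
          refine Finset.sum_congr rfl fun k _ => ?_
          rw [euclid_norm_sq]
          exact Finset.sum_congr rfl fun j _ => hterm j k
      _ ≤ ∑ k, (‖T‖ * ‖(WithLp.equiv 2 (Fin N → ℝ)).symm (fun j' => y (j', k))‖) ^ 2 := by
          refine Finset.sum_le_sum fun k _ => ?_
          have := T.le_opNorm ((WithLp.equiv 2 (Fin N → ℝ)).symm (fun j' => y (j', k)))
          exact pow_le_pow_left₀ (norm_nonneg _) this 2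
      _ = ‖T‖ ^ 2 * ∑ k, ‖(WithLp.equiv 2 (Fin N → ℝ)).symm (fun j' => y (j', k))‖ ^ 2 := by
          rw [Finset.mul_sum]; exact Finset.sum_congr rfl fun k _ => by ring
      _ = ‖T‖ ^ 2 * ‖y‖ ^ 2 := by
          congr 1
          rw [euclid_norm_sq, Fintype.sum_prod_type, Finset.sum_comm]
          refine Finset.sum_congr rfl fun k _ => ?_
          rw [euclid_norm_sq]
          rfl
      _ = (‖T‖ * ‖y‖) ^ 2 := by ring
  exact (pow_le_pow_iff_left₀ (norm_nonneg _) (by positivity) two_ne_zero).mp h2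

open RealInnerProductSpace

theorem stmt4 (N n : ℕ) (hN : 0 < N) (W : Matrix (Fin N) (Fin N) ℝ)
    (hsymm : Wᵀ = W)
    (hnonneg : ∀ i j, 0 ≤ W i j)
    (hdiag : ∀ i, 0 < W i i)
    (hrow : W.mulVec (fun _ => 1) = fun _ => 1)
    (hcol : Matrix.vecMul (fun _ => 1) W = fun _ => 1)
    (hconn : (SimpleGraph.fromRel (fun i j : Fin N => 0 < W i j)).Connected)
    (σ : ℝ)
    (hσdef : σ = ‖Matrix.toEuclideanCLM (𝕜 := ℝ)
        (W - (N : ℝ)⁻¹ • Matrix.of (fun _ _ : Fin N => (1 : ℝ)))‖)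
    (hσlt : σ < 1)
    (Wk Winf : Matrix (Fin N × Fin n) (Fin N × Fin n) ℝ)
    (hWk : Wk = W ⊗ₖ (1 : Matrix (Fin n) (Fin n) ℝ))
    (hWinf : Winf = ((N : ℝ)⁻¹ • Matrix.of (fun _ _ : Fin N => (1 : ℝ))) ⊗ₖ
        (1 : Matrix (Fin n) (Fin n) ℝ))
    (x xstar : EuclideanSpace ℝ (Fin N × Fin n))
    (hstar : Matrix.toEuclideanCLM (𝕜 := ℝ) Winf xstar = xstar)
    (xperp : EuclideanSpace ℝ (Fin N × Fin n))
    (hperp : xperp = x - Matrix.toEuclideanCLM (𝕜 := ℝ) Winf x) :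
    ‖Matrix.toEuclideanCLM (𝕜 := ℝ) Wk x - xstar‖ ^ 2 =
        ‖Matrix.toEuclideanCLM (𝕜 := ℝ) Winf x - xstar‖ ^ 2 +
        ‖Matrix.toEuclideanCLM (𝕜 := ℝ) Wk xperp‖ ^ 2 ∧
      ‖Matrix.toEuclideanCLM (𝕜 := ℝ) Wk xperp‖ ≤ σ * ‖xperp‖ := by
  have hN0 : (N : ℝ) ≠ 0 := Nat.cast_ne_zero.mpr hN.ne'
  set J : Matrix (Fin N) (Fin N) ℝ := (N : ℝ)⁻¹ • Matrix.of (fun _ _ : Fin N => (1 : ℝ)) with hJ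
  -- basic matrix identities
  have hJJ : J * J = J := by
    ext i j
    simp [hJ, Matrix.mul_apply, Finset.sum_const, Finset.card_univ]
    field_simp
  have hJW : J * W = J := by
    ext i j
    have := congrFun hcol j
    simp only [Matrix.vecMul, dotProduct, one_mul] at this
    simp [hJ, Matrix.mul_apply, ← Finset.mul_sum, this]
  have hWJ : W * J = J := by
    ext i j
    have := congrFun hrow i
    simp only [Matrix.mulVec, dotProduct, mul_one] at this
    simp only [hJ, Matrix.mul_apply, Matrix.smul_apply, Matrix.of_apply, smul_eq_mul, mul_one]
    rw [← Finset.sum_mul, this, one_mul]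
  have hJT : Jᵀ = J := by
    ext i j; simp [hJ]
  -- operator facts
  set P := Matrix.toEuclideanCLM (𝕜 := ℝ) Winf with hP
  set K := Matrix.toEuclideanCLM (𝕜 := ℝ) Wk with hK
  have hWW : Winf * Winf = Winf := by
    rw [hWinf, ← Matrix.mul_kronecker_mul, hJJ, one_mul]
  have hWkW : Wk * Winf = Winf := by
    rw [hWinf, hWk, ← Matrix.mul_kronecker_mul, hWJ, one_mul]
  have hWWk : Winf * Wk = Winf := by
    rw [hWinf, hWk, ← Matrix.mul_kronecker_mul, hJW, one_mul]
  have hPP : ∀ v, P (P v) = P v := by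
    intro v
    rw [hP, ← ContinuousLinearMap.mul_apply, ← _root_.map_mul, hWW]
  have hKPv : ∀ v, K (P v) = P v := by
    intro v
    rw [hP, hK, ← ContinuousLinearMap.mul_apply, ← _root_.map_mul, hWkW]
  have hPKv : ∀ v, P (K v) = P v := by
    intro v
    rw [hP, hK, ← ContinuousLinearMap.mul_apply, ← _root_.map_mul, hWWk]
  have hWinfSA : star Winf = Winf := by
    show Winfᴴ = Winf
    rw [hWinf]
    ext ⟨i, k⟩ ⟨j, l⟩
    simp [Matrix.conjTranspose_apply, Matrix.kronecker_apply, Matrix.one_apply, hJ, eq_comm]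
  have hPsa : IsSelfAdjoint P := by
    rw [hP]
    show star _ = _
    rw [← map_star, hWinfSA]
  have hPself : ∀ u v : EuclideanSpace ℝ (Fin N × Fin n), ⟪P u, v⟫ = ⟪u, P v⟫ := by
    intro u v
    rw [← ContinuousLinearMap.adjoint_inner_right, ← ContinuousLinearMap.star_eq_adjoint, hPsa]
  -- key vector facts
  have hPxperp : P xperp = 0 := by
    rw [hperp, map_sub, hPP, sub_self]
  have hdecomp : K x - xstar = (P x - xstar) + K xperp := by
    have hx : x = xperp + P x := by rw [hperp]; abel
    calc K x - xstar = K (xperp + P x) - xstar := by rw [← hx]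
      _ = K xperp + P x - xstar := by rw [map_add, hKPv]
      _ = (P x - xstar) + K xperp := by abel
  have hinner : ⟪P x - xstar, K xperp⟫ = (0 : ℝ) := by
    have hu : P (P x - xstar) = P x - xstar := by
      rw [map_sub, hPP, hstar]
    calc ⟪P x - xstar, K xperp⟫ = ⟪P (P x - xstar), K xperp⟫ := by rw [hu]
      _ = ⟪P x - xstar, P (K xperp)⟫ := hPself _ _
      _ = ⟪P x - xstar, (0 : EuclideanSpace ℝ (Fin N × Fin n))⟫ := by
          rw [hPKv, hperp, map_sub, hPP, sub_self]
      _ = 0 := inner_zero_right _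
  constructor
  · rw [hdecomp, norm_add_sq_real, hinner]
    ring
  · -- second part
    have hKxperp : K xperp = Matrix.toEuclideanCLM (𝕜 := ℝ)
        ((W - J) ⊗ₖ (1 : Matrix (Fin n) (Fin n) ℝ)) xperp := by
      have hsub : (W - J) ⊗ₖ (1 : Matrix (Fin n) (Fin n) ℝ) = Wk - Winf := by
        rw [hWk, hWinf]
        ext ⟨i, k⟩ ⟨j, l⟩
        simp [Matrix.kronecker_apply, Matrix.sub_apply, sub_mul, hJ]
      rw [hsub, map_sub, ContinuousLinearMap.sub_apply, ← hP, ← hK, hPxperp, sub_zero]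
    rw [hKxperp, hσdef]
    exact kron_one_norm_le (W - J) xperp
end

section
/- (Lemma 3 energy identity) Suppose ṽ_{k+1} = λ̃_k − ℬ²λ̃_k + βΠ(x_{k+1} − x*) + ℬỹ_k and ỹ_{k+1} = ỹ_k − γℬṽ_{k+1}, where ℬ is symmetric. Then ‖ṽ_{k+1}‖²_{I−γℬ²} + γ⁻¹‖ỹ_{k+1}‖² = ‖λ̃_k − ℬ²λ̃_k + βΠ(x_{k+1} − x*)‖² − ‖ℬỹ_k‖² + γ⁻¹‖ỹ_k‖². -/
open Matrix

/-- Lemma 3 energy identity: if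
ṽ₊ = λ̃ − ℬ²λ̃ + βΠ(x₊ − x*) + ℬỹ and ỹ₊ = ỹ − γℬṽ₊ with ℬ symmetric, then
‖ṽ₊‖²_{I−γℬ²} + γ⁻¹‖ỹ₊‖² = ‖λ̃ − ℬ²λ̃ + βΠ(x₊ − x*)‖² − ‖ℬỹ‖² + γ⁻¹‖ỹ‖²,
where ‖z‖²_M = zᵀMz and ‖z‖² = zᵀz. -/
theorem stmt9 (p n : ℕ) (B : Matrix (Fin p) (Fin p) ℝ) (hBsymm : Bᵀ = B)
    (Pi : Matrix (Fin p) (Fin n) ℝ) (β γ : ℝ) (hβ : 0 < β) (hγ : 0 < γ)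
    (hPSD : (1 - γ • (B * B)).PosSemidef)
    (lamt yt vnew ynew : Fin p → ℝ) (xnew xstar : Fin n → ℝ)
    (hv : vnew = lamt - (B * B).mulVec lamt + β • Pi.mulVec (xnew - xstar)
        + B.mulVec yt)
    (hy : ynew = yt - γ • B.mulVec vnew) :
    dotProduct vnew ((1 - γ • (B * B)).mulVec vnew)
        + γ⁻¹ * dotProduct ynew ynew =
      dotProduct (lamt - (B * B).mulVec lamt + β • Pi.mulVec (xnew - xstar))
          (lamt - (B * B).mulVec lamt + β • Pi.mulVec (xnew - xstar))
        - dotProduct (B.mulVec yt) (B.mulVec yt)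
        + γ⁻¹ * dotProduct yt yt := by
  -- symmetry of B as a bilinear form
  have hsym : ∀ u w : Fin p → ℝ, u ⬝ᵥ B.mulVec w = B.mulVec u ⬝ᵥ w := by
    intro u w
    rw [Matrix.dotProduct_mulVec, ← Matrix.mulVec_transpose, hBsymm,
      dotProduct_comm]
  set a := lamt - (B * B).mulVec lamt + β • Pi.mulVec (xnew - xstar) with ha
  have hva : vnew = a + B.mulVec yt := hv
  -- expand the M-norm term
  have h1 : vnew ⬝ᵥ (1 - γ • (B * B)).mulVec vnew
      = vnew ⬝ᵥ vnew - γ * (B.mulVec vnew ⬝ᵥ B.mulVec vnew) := by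
    rw [Matrix.sub_mulVec, Matrix.smul_mulVec, Matrix.one_mulVec,
      dotProduct_sub, dotProduct_smul, ← Matrix.mulVec_mulVec,
      hsym]
    simp [smul_eq_mul]
  -- expand the new-y term
  have h2 : ynew ⬝ᵥ ynew = yt ⬝ᵥ yt - 2 * γ * (yt ⬝ᵥ B.mulVec vnew)
      + γ ^ 2 * (B.mulVec vnew ⬝ᵥ B.mulVec vnew) := by
    rw [hy]
    simp only [dotProduct_sub, sub_dotProduct,
      dotProduct_smul, smul_dotProduct, smul_eq_mul]
    have := dotProduct_comm yt (γ • B.mulVec vnew)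
    simp only [dotProduct_smul, smul_eq_mul] at this
    ring_nf
    rw [dotProduct_comm (B.mulVec vnew) yt]
    ring
  -- expand v = a + By
  have h3 : vnew ⬝ᵥ vnew = a ⬝ᵥ a + 2 * (a ⬝ᵥ B.mulVec yt)
      + B.mulVec yt ⬝ᵥ B.mulVec yt := by
    rw [hva]
    simp only [dotProduct_add, add_dotProduct]
    rw [dotProduct_comm (B.mulVec yt) a]
    ring
  have h4 : yt ⬝ᵥ B.mulVec vnew
      = a ⬝ᵥ B.mulVec yt + B.mulVec yt ⬝ᵥ B.mulVec yt := by
    rw [hsym, hva, dotProduct_add, dotProduct_comm (B.mulVec yt) a]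
  rw [h1, h2, h3, h4]
  field_simp
  ring
end

section
/- Let M_α be the symmetric 2×2 matrix with entries M_α(1,1) = 1 − (μ/N)α + L²α², M_α(1,2) = M_α(2,1) = (σ+1)Lα, M_α(2,2) = σ² + 3σLα + L²α², where 0 < μ ≤ L, N ≥ 1, and 0 ≤ σ < 1. If 0 < α < min{(1−σ²)/(9σL), √(1−σ²)/(√3 L), μ(1−σ)/(6NL²)}, then the spectral radius ρ(M_α) < 1. -/
open Matrix

private lemma stmt12_root (a b c lam : ℝ)
    (hdet : (lam - a) * (lam - c) - b * b = 0)
    (hA : (1 - a) * (1 - c) - b * b > 0)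
    (hB : (1 + a) * (1 + c) - b * b > 0)
    (hC : a + c < 2) (hD : -2 < a + c) : |lam| < 1 := by
  rw [abs_lt]
  constructor
  · by_contra h
    push_neg at h
    have hfac : (-1 - lam) * (-1 - (a + c) + lam) = (1 + a) * (1 + c) - b * b := by
      linear_combination -hdet
    rcases eq_or_lt_of_le h with heq | hlt
    · rw [← heq] at hfac; nlinarith
    · nlinarith [hfac, hB, hD]
  · by_contra h
    push_neg at h
    have hfac : (1 - lam) * (1 + lam - (a + c)) = (1 - a) * (1 - c) - b * b := by
      linear_combination -hdet
    rcases eq_or_lt_of_le h with heq | hlt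
    · rw [heq] at hfac; nlinarith
    · nlinarith [hfac, hA, hC]

private lemma stmt12_arith (m L σ α : ℝ) (hm0 : 0 < m) (hmL : m ≤ L)
    (hσ0 : 0 < σ) (hσ1 : σ < 1) (hα0 : 0 < α)
    (h1 : 9 * σ * L * α < 1 - σ ^ 2)
    (h2 : 3 * L ^ 2 * α ^ 2 < 1 - σ ^ 2)
    (h3 : 6 * L ^ 2 * α < m * (1 - σ)) :
    (1 - (1 - m * α + L ^ 2 * α ^ 2)) * (1 - (σ ^ 2 + 3 * σ * L * α + L ^ 2 * α ^ 2))
        - ((σ + 1) * L * α) * ((σ + 1) * L * α) > 0 ∧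
    (1 + (1 - m * α + L ^ 2 * α ^ 2)) * (1 + (σ ^ 2 + 3 * σ * L * α + L ^ 2 * α ^ 2))
        - ((σ + 1) * L * α) * ((σ + 1) * L * α) > 0 ∧
    (1 - m * α + L ^ 2 * α ^ 2) + (σ ^ 2 + 3 * σ * L * α + L ^ 2 * α ^ 2) < 2 ∧
    -2 < (1 - m * α + L ^ 2 * α ^ 2) + (σ ^ 2 + 3 * σ * L * α + L ^ 2 * α ^ 2) := by
  have hL : 0 < L := lt_of_lt_of_le hm0 hmL
  have h1σ : (0:ℝ) < 1 - σ := by linarith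
  have hσ2 : 0 < 1 - σ ^ 2 := by nlinarith [mul_pos h1σ (by linarith : (0:ℝ) < 1 + σ)]
  have hLa : 6 * L * α < 1 - σ := by
    have hmono : m * (1 - σ) ≤ L * (1 - σ) := mul_le_mul_of_nonneg_right hmL h1σ.le
    have h6 : L * (6 * L * α) < L * (1 - σ) := by linarith [lt_of_lt_of_le h3 hmono]
    exact lt_of_mul_lt_mul_left h6 hL.le
  have hLa0 : 0 < L * α := mul_pos hL hα0
  have hσLα : 0 < σ * L * α := mul_pos (mul_pos hσ0 hL) hα0
  have hmα : 0 < m * α := mul_pos hm0 hα0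
  have hLa2 : 36 * L ^ 2 * α ^ 2 < (1 - σ) ^ 2 := by
    have := mul_self_lt_mul_self (by positivity) hLa
    linarith [this]
  have hss : (1 - σ) ^ 2 ≤ 1 - σ ^ 2 := by linarith [mul_pos hσ0 h1σ]
  have hmaLa : m * α ≤ L * α := mul_le_mul_of_nonneg_right hmL hα0.le
  have f1 : L ^ 2 * α ^ 2 < m * (1 - σ) * α / 6 := by
    have := mul_lt_mul_of_pos_right h3 hα0
    linarith [this]
  refine ⟨?_, ?_, ?_, ?_⟩
  · have f2 : 1 - (1 - m * α + L ^ 2 * α ^ 2) ≥ 5 / 6 * (m * α) := by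
      linarith [f1, mul_pos hmα hσ0]
    have f3 : 1 - (σ ^ 2 + 3 * σ * L * α + L ^ 2 * α ^ 2) > 23 / 36 * (1 - σ ^ 2) := by
      linarith [h1, hLa2, hss]
    have f4 : 5 / 6 * (m * α) * (23 / 36 * (1 - σ ^ 2))
        ≤ (1 - (1 - m * α + L ^ 2 * α ^ 2)) * (1 - (σ ^ 2 + 3 * σ * L * α + L ^ 2 * α ^ 2)) := by
      apply mul_le_mul f2 f3.le (by positivity) (by linarith [f2, hmα])
    have f5 : ((σ + 1) * L * α) * ((σ + 1) * L * α) < 1 / 3 * (m * (1 - σ ^ 2) * α) := by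
      have e1 : (σ + 1) ^ 2 * (L ^ 2 * α ^ 2) < (σ + 1) ^ 2 * (m * (1 - σ) * α / 6) :=
        mul_lt_mul_of_pos_left f1 (by positivity)
      have e2 : (σ + 1) ^ 2 * (m * (1 - σ) * α / 6)
          ≤ (2 * (σ + 1)) * (m * (1 - σ) * α / 6) := by
        have e3 : (σ + 1) ^ 2 ≤ 2 * (σ + 1) := by linarith [mul_pos hσ0 h1σ]
        exact mul_le_mul_of_nonneg_right e3 (by positivity)
      linarith [e1, e2]
    linarith [f4, f5, mul_pos (mul_pos hm0 hσ2) hα0]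
  · have hP : 1 ≤ 1 + (σ ^ 2 + 3 * σ * L * α + L ^ 2 * α ^ 2) := by
      linarith [sq_nonneg σ, hσLα, sq_nonneg (L * α)]
    have hQ : 11 / 6 ≤ 1 + (1 - m * α + L ^ 2 * α ^ 2) := by
      linarith [hmaLa, hLa, hσ0, sq_nonneg (L * α)]
    have hPQ : 11 / 6 * 1 ≤ (1 + (1 - m * α + L ^ 2 * α ^ 2))
        * (1 + (σ ^ 2 + 3 * σ * L * α + L ^ 2 * α ^ 2)) :=
      mul_le_mul hQ hP (by norm_num) (by linarith [hQ])
    have hb4 : ((σ + 1) * L * α) * ((σ + 1) * L * α) ≤ 4 * (L ^ 2 * α ^ 2) := by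
      have : 0 ≤ (1 - σ) * (3 + σ) * (L * α) ^ 2 := by positivity
      linarith [this]
    have h1σ2 : (1 - σ) ^ 2 ≤ 1 := by linarith [mul_pos hσ0 h1σ]
    linarith [hPQ, hb4, hLa2, h1σ2]
  · linarith [h1, h2, hmα]
  · linarith [hmaLa, hLa, hσ0, sq_nonneg σ, hσLα, sq_nonneg (L * α)]

/-- with 0 < μ ≤ L, N ≥ 1, 0 < σ < 1 and
0 < α < min{(1−σ²)/(9σL), √(1−σ²)/(√3 L), μ(1−σ)/(6NL²)},
the symmetric 2×2 matrix M_α with entries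
M_α = [[1 − (μ/N)α + L²α², (σ+1)Lα], [(σ+1)Lα, σ² + 3σLα + L²α²]]
has spectral radius ρ(M_α) < 1 (all eigenvalues have absolute value < 1). -/
theorem stmt12 (μ L σ α : ℝ) (N : ℕ) (hμ : 0 < μ) (hμL : μ ≤ L)
    (hN : 1 ≤ N) (hσ0 : 0 < σ) (hσ1 : σ < 1) (hα0 : 0 < α)
    (hα : α < min ((1 - σ ^ 2) / (9 * σ * L))
      (min (Real.sqrt (1 - σ ^ 2) / (Real.sqrt 3 * L))
        (μ * (1 - σ) / (6 * N * L ^ 2)))) :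
    ∀ lam ∈ spectrum ℝ
      (!![1 - (μ / N) * α + L ^ 2 * α ^ 2, (σ + 1) * L * α;
          (σ + 1) * L * α, σ ^ 2 + 3 * σ * L * α + L ^ 2 * α ^ 2] :
        Matrix (Fin 2) (Fin 2) ℝ), |lam| < 1 := by
  intro lam hlam
  have hL : 0 < L := lt_of_lt_of_le hμ hμL
  have hNpos : (0:ℝ) < N := by exact_mod_cast Nat.lt_of_lt_of_le Nat.zero_lt_one hN
  have hN1 : (1:ℝ) ≤ N := by exact_mod_cast hN
  set a : ℝ := 1 - (μ / N) * α + L ^ 2 * α ^ 2 with ha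
  set b : ℝ := (σ + 1) * L * α with hb
  set c : ℝ := σ ^ 2 + 3 * σ * L * α + L ^ 2 * α ^ 2 with hc
  have hdet : (lam - a) * (lam - c) - b * b = 0 := by
    rw [spectrum.mem_iff, Matrix.isUnit_iff_isUnit_det, isUnit_iff_ne_zero, not_not] at hlam
    have hm : algebraMap ℝ (Matrix (Fin 2) (Fin 2) ℝ) lam - !![a, b; b, c]
        = !![lam - a, -b; -b, lam - c] := by
      ext i j
      fin_cases i <;> fin_cases j <;>
        simp [Algebra.algebraMap_eq_smul_one, Matrix.one_apply]
    rw [hm, Matrix.det_fin_two_of] at hlam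
    linarith [hlam]
  rw [lt_min_iff, lt_min_iff] at hα
  obtain ⟨hα1, hα2, hα3⟩ := hα
  have hσ2 : 0 < 1 - σ ^ 2 := by nlinarith
  have h1 : 9 * σ * L * α < 1 - σ ^ 2 := by
    rw [lt_div_iff₀ (by positivity)] at hα1; linarith
  have h2 : 3 * L ^ 2 * α ^ 2 < 1 - σ ^ 2 := by
    rw [lt_div_iff₀ (by positivity)] at hα2
    have h := mul_self_lt_mul_self (by positivity) hα2
    rw [Real.mul_self_sqrt hσ2.le] at h
    nlinarith [Real.sq_sqrt (by norm_num : (3:ℝ) ≥ 0), Real.sqrt_nonneg 3]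
  have h3 : 6 * (N:ℝ) * L ^ 2 * α < μ * (1 - σ) := by
    rw [lt_div_iff₀ (by positivity)] at hα3; linarith
  have hm0 : 0 < μ / N := by positivity
  have hmL : μ / N ≤ L := (div_le_self hμ.le hN1).trans hμL
  have h3' : 6 * L ^ 2 * α < μ / N * (1 - σ) := by
    rw [div_mul_eq_mul_div, lt_div_iff₀ hNpos]
    linarith [h3]
  obtain ⟨hA, hB, hC, hD⟩ := stmt12_arith (μ / N) L σ α hm0 hmL hσ0 hσ1 hα0 h1 h2 h3'
  exact stmt12_root a b c lam hdet hA hB hC hD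
end
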